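/- (Cancellation identities F_{ℓ,p}) Let L be a Lie algebra with elements X_1,...,X_m. For any 2 ≤ ℓ, any 1 ≤ p ≤ ℓ-1, any word v of length ℓ, any word w with |w| ≥ 1, and any nonnegative integers b_1,...,b_p with b_1 + ⋯ + b_p ≥ 1: Σ_{σ ∈ S_ℓ} π_ℓ(σ) Σ_{1 ≤ i_1 < ⋯ < i_p ≤ ℓ} X_{σ_{i_p}(v)^{b_p} ⋯ σ_{i_2}(v)^{b_2} σ_{i_1}(v)^{b_1} w} = 0, where X_u denotes the left-nested bracket of the word u and σ_i(v)^b means the letter σ_i(v) repeated b times. -/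

import Mathlib

/-- The coefficient `π_ℓ` evaluated on the word `σ(1)σ(2)⋯σ(ℓ)` (letters `0,…,ℓ-1`),
defined inductively: value `1` on a single letter; if the word starts with the
smallest letter `0`, recurse on the remaining (shifted) word; if it ends with `0`,
recurse with a sign change; otherwise the value is `0`. -/
def piW : List ℕ → ℤ
  | [] => 0
  | [_] => 1
  | a :: b :: l =>
    if a = 0 then piW ((b :: l).map (· - 1))
    else if (a :: b :: l).getLast? = some 0 then
      - piW ((a :: b :: l).dropLast.map (· - 1))
    else 0
termination_by w => w.length
decreasing_by all_goals (simp; try omega)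

/-- `π_ℓ(σ)` for a permutation `σ` of `ℓ` letters. -/
def piPerm {ℓ : ℕ} (σ : Equiv.Perm (Fin ℓ)) : ℤ :=
  piW ((List.finRange ℓ).map (fun j => (σ j : ℕ)))

/-- Left-nested Lie bracket of a list: `[x₁,[x₂,…,[x_{k-1},x_k]…]]`. -/
def nestedBracket {L : Type*} [LieRing L] : List L → L
  | [] => 0
  | [x] => x
  | x :: y :: l => ⁅x, nestedBracket (y :: l)⁆

lemma piW_cons (b : ℕ) (l : List ℕ) : piW (0 :: b :: l) = piW ((b :: l).map (· - 1)) := by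
  rw [piW]; simp

lemma piW_concat (a : ℕ) (l : List ℕ) (ha : a ≠ 0) :
    piW ((a :: l) ++ [0]) = - piW ((a :: l).map (· - 1)) := by
  cases l with
  | nil => rw [show (([a] : List ℕ) ++ [0]) = a :: 0 :: [] by simp, piW]; simp [ha, piW]
  | cons b t =>
      rw [show ((a :: b :: t) ++ [0]) = a :: b :: (t ++ [0]) by simp, piW]
      rw [if_neg ha, show (a :: b :: (t ++ [0])) = (a :: b :: t) ++ [0] by simp,
        List.getLast?_concat, List.dropLast_concat]
      simp

lemma piW_eq_zero (a b : ℕ) (l : List ℕ) (ha : a ≠ 0) (hl : (a :: b :: l).getLast? ≠ some 0) :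
    piW (a :: b :: l) = 0 := by
  rw [piW]; rw [if_neg ha, if_neg hl]

open Equiv List

def word {n : ℕ} (σ : Equiv.Perm (Fin n)) : List ℕ := (List.finRange n).map fun i => (σ i : ℕ)

def E1 {n : ℕ} (e : Equiv.Perm (Fin n)) : Equiv.Perm (Fin (n+1)) :=
  Equiv.Perm.decomposeFin.symm (0, e)

def E2 {n : ℕ} (e : Equiv.Perm (Fin n)) : Equiv.Perm (Fin (n+1)) :=
  E1 e * (finRotate (n+1))

@[simp] lemma E1_zero {n : ℕ} (e : Equiv.Perm (Fin n)) : E1 e 0 = 0 :=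
  Equiv.Perm.decomposeFin_symm_apply_zero 0 e

@[simp] lemma E1_succ {n : ℕ} (e : Equiv.Perm (Fin n)) (i : Fin n) : E1 e i.succ = (e i).succ := by
  rw [E1, Equiv.Perm.decomposeFin_symm_apply_succ, Equiv.swap_self]
  rfl

@[simp] lemma E2_castSucc {n : ℕ} (e : Equiv.Perm (Fin n)) (i : Fin n) :
    E2 e i.castSucc = (e i).succ := by
  rw [E2, Equiv.Perm.mul_apply, finRotate_succ_apply, Fin.coeSucc_eq_succ, E1_succ]

@[simp] lemma E2_last {n : ℕ} (e : Equiv.Perm (Fin n)) : E2 e (Fin.last n) = 0 := by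
  rw [E2, Equiv.Perm.mul_apply, finRotate_last, E1_zero]

lemma word_E1 {n : ℕ} (e : Equiv.Perm (Fin n)) : word (E1 e) = 0 :: (word e).map (· + 1) := by
  rw [word, List.finRange_succ, List.map_cons, E1_zero, List.map_map, word, List.map_map]
  simp

lemma word_E2 {n : ℕ} (e : Equiv.Perm (Fin n)) : word (E2 e) = (word e).map (· + 1) ++ [0] := by
  rw [word, List.finRange_succ_last, List.map_append, List.map_map, word, List.map_map]
  congr 1
  · apply List.map_congr_left; intro i _; simp
  · simp

def piPerm' {ℓ : ℕ} (σ : Equiv.Perm (Fin ℓ)) : ℤ := piW (word σ)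

lemma word_ne_nil {m : ℕ} (e : Equiv.Perm (Fin (m+1))) : word e ≠ [] := by
  simp [word, List.finRange_succ]

lemma word_getLast? {m : ℕ} (e : Equiv.Perm (Fin (m+1))) :
    (word e).getLast? = some ((e (Fin.last m) : ℕ)) := by
  rw [word, List.finRange_succ_last, List.map_append]
  simp

lemma sum_perm_succ {M : Type*} [AddCommMonoid M] {n : ℕ} (hn : 1 ≤ n)
    (F : Equiv.Perm (Fin (n+1)) → M)
    (h0 : ∀ σ : Equiv.Perm (Fin (n+1)), σ 0 ≠ 0 → σ (Fin.last n) ≠ 0 → F σ = 0) :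
    ∑ σ : Equiv.Perm (Fin (n+1)), F σ =
      (∑ e : Equiv.Perm (Fin n), F (E1 e)) + ∑ e : Equiv.Perm (Fin n), F (E2 e) := by
  classical
  have fst_eq : ∀ σ : Equiv.Perm (Fin (n+1)), (Equiv.Perm.decomposeFin σ).1 = σ 0 := by
    intro σ
    conv_rhs => rw [← Equiv.symm_apply_apply Equiv.Perm.decomposeFin σ]
    rw [show Equiv.Perm.decomposeFin σ =
      ((Equiv.Perm.decomposeFin σ).1, (Equiv.Perm.decomposeFin σ).2) from rfl,
      Equiv.Perm.decomposeFin_symm_apply_zero]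
  have key1 : ∀ σ : Equiv.Perm (Fin (n+1)), σ 0 = 0 → E1 (Equiv.Perm.decomposeFin σ).2 = σ := by
    intro σ h
    rw [E1, show ((0 : Fin (n+1)), (Equiv.Perm.decomposeFin σ).2) =
      Equiv.Perm.decomposeFin σ by rw [Prod.ext_iff]; exact ⟨by rw [fst_eq, h], rfl⟩]
    exact Equiv.symm_apply_apply _ _
  have hlast0 : (finRotate (n+1))⁻¹ 0 = Fin.last n := by
    rw [Equiv.Perm.inv_eq_iff_eq, finRotate_last]
  rw [← Finset.sum_filter_add_sum_filter_not Finset.univ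
    (fun σ : Equiv.Perm (Fin (n+1)) => σ 0 = 0 ∨ σ (Fin.last n) = 0) F]
  have : ∑ σ ∈ Finset.univ.filter
      (fun σ : Equiv.Perm (Fin (n+1)) => ¬(σ 0 = 0 ∨ σ (Fin.last n) = 0)), F σ = 0 := by
    apply Finset.sum_eq_zero
    intro σ hσ
    rw [Finset.mem_filter] at hσ
    push_neg at hσ
    exact h0 σ hσ.2.1 hσ.2.2
  rw [this, add_zero]
  have hsplit : Finset.univ.filter
      (fun σ : Equiv.Perm (Fin (n+1)) => σ 0 = 0 ∨ σ (Fin.last n) = 0) =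
      (Finset.univ.filter (fun σ : Equiv.Perm (Fin (n+1)) => σ 0 = 0)) ∪
      (Finset.univ.filter (fun σ : Equiv.Perm (Fin (n+1)) => σ (Fin.last n) = 0)) := by
    rw [Finset.filter_or]
  have hdisj : Disjoint
      (Finset.univ.filter (fun σ : Equiv.Perm (Fin (n+1)) => σ 0 = 0))
      (Finset.univ.filter (fun σ : Equiv.Perm (Fin (n+1)) => σ (Fin.last n) = 0)) := by
    rw [Finset.disjoint_left]
    intro σ h1 h2
    rw [Finset.mem_filter] at h1 h2
    have h3 := σ.injective (h1.2.trans h2.2.symm)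
    have h4 := congrArg Fin.val h3
    simp [Fin.last] at h4
    omega
  rw [hsplit, Finset.sum_union hdisj]
  congr 1
  · apply Finset.sum_nbij' (fun σ => (Equiv.Perm.decomposeFin σ).2) (fun e => E1 e)
    · intro σ hσ; exact Finset.mem_univ _
    · intro e he
      simp only [Finset.mem_filter, Finset.mem_univ, true_and]
      exact E1_zero e
    · intro σ hσ
      rw [Finset.mem_filter] at hσ
      exact key1 σ hσ.2
    · intro e he
      rw [show E1 e = Equiv.Perm.decomposeFin.symm (0, e) from rfl,
        Equiv.apply_symm_apply]
    · intro σ hσ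
      rw [Finset.mem_filter] at hσ
      rw [key1 σ hσ.2]
  · apply Finset.sum_nbij'
      (fun σ => (Equiv.Perm.decomposeFin (σ * (finRotate (n+1))⁻¹)).2) (fun e => E2 e)
    · intro σ hσ; exact Finset.mem_univ _
    · intro e he
      simp only [Finset.mem_filter, Finset.mem_univ, true_and]
      exact E2_last e
    · intro σ hσ
      rw [Finset.mem_filter] at hσ
      rw [E2, key1 (σ * (finRotate (n+1))⁻¹) (by rw [Equiv.Perm.mul_apply, hlast0, hσ.2])]
      group
    · intro e he
      rw [E2, mul_inv_cancel_right,
        show E1 e = Equiv.Perm.decomposeFin.symm (0, e) from rfl, Equiv.apply_symm_apply]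
    · intro σ hσ
      rw [Finset.mem_filter] at hσ
      rw [E2, key1 (σ * (finRotate (n+1))⁻¹) (by rw [Equiv.Perm.mul_apply, hlast0, hσ.2])]
      group


lemma piPerm'_E1 {m : ℕ} (e : Equiv.Perm (Fin (m+1))) : piPerm' (E1 e) = piPerm' e := by
  rw [piPerm', piPerm', word_E1]
  cases h : word e with
  | nil => exact absurd h (word_ne_nil e)
  | cons c t =>
      rw [List.map_cons, piW_cons]
      congr 1
      simp only [List.map_cons, List.map_map, Nat.add_sub_cancel]
      simp [Function.comp_def]

lemma piPerm'_E2 {m : ℕ} (e : Equiv.Perm (Fin (m+1))) : piPerm' (E2 e) = - piPerm' e := by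
  rw [piPerm', piPerm', word_E2]
  cases h : word e with
  | nil => exact absurd h (word_ne_nil e)
  | cons c t =>
      rw [List.map_cons, piW_concat _ _ (by omega)]
      congr 2
      simp only [List.map_cons, List.map_map, Nat.add_sub_cancel]
      simp [Function.comp_def]

lemma piPerm'_eq_zero {n : ℕ} (σ : Equiv.Perm (Fin (n+1+1)))
    (h1 : σ 0 ≠ 0) (h2 : σ (Fin.last (n+1)) ≠ 0) : piPerm' σ = 0 := by
  rw [piPerm']
  have hs : word σ = ((σ 0 : ℕ)) :: ((σ (Fin.succ 0) : ℕ)) ::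
      ((List.finRange n).map fun i => ((σ i.succ.succ : ℕ))) := by
    rw [word, List.finRange_succ, List.finRange_succ]
    simp [List.map_map, Function.comp]
  rw [hs]
  apply piW_eq_zero
  · exact fun h => h1 (Fin.ext (by rw [h]; simp))
  · rw [← hs, word_getLast?]
    simp only [ne_eq, Option.some.injEq]
    intro hc
    exact h2 (Fin.ext (by rw [hc]; simp))

lemma nestedBracket_cons {L : Type*} [LieRing L] (a : L) (l : List L) (hl : l ≠ []) :
    nestedBracket (a :: l) = ⁅a, nestedBracket l⁆ := by
  cases l with
  | nil => exact absurd rfl hl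
  | cons b t => rfl

attribute [local instance] LieRing.ofAssociativeRing

/-- Part 1: the bracket identity in an associative ring. -/
lemma bracket_eq_sum {R : Type*} [Ring R] : ∀ (n : ℕ) (x : Fin (n+1) → R),
    nestedBracket ((List.finRange (n+1)).map x) =
      ∑ σ : Equiv.Perm (Fin (n+1)), piPerm' σ • ((List.finRange (n+1)).map fun i => x (σ i)).prod
  | 0, x => by
    rw [Fintype.sum_subsingleton _ (1 : Equiv.Perm (Fin 1))]
    show nestedBracket [x 0] = piPerm' 1 • (x ((1 : Equiv.Perm (Fin 1)) 0) * 1)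
    have : piPerm' (1 : Equiv.Perm (Fin 1)) = 1 := by
      show piW (word 1) = 1
      rw [show word (1 : Equiv.Perm (Fin 1)) = [0] from rfl]
      simp [piW]
    rw [this]
    show x 0 = (1 : ℤ) • (x ((1 : Equiv.Perm (Fin 1)) 0) * 1)
    simp
  | (n+1), x => by
    rw [sum_perm_succ (by omega) _ (fun σ h1 h2 => by rw [piPerm'_eq_zero σ h1 h2, zero_smul])]
    have hx0 : ∀ e : Equiv.Perm (Fin (n+1)),
        ((List.finRange (n+2)).map fun i => x (E1 e i)).prod =
          x 0 * ((List.finRange (n+1)).map fun i => (x ∘ Fin.succ) (e i)).prod := by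
      intro e
      rw [List.finRange_succ, List.map_cons, List.prod_cons, E1_zero, List.map_map]
      simp [Function.comp_def]
    have hx1 : ∀ e : Equiv.Perm (Fin (n+1)),
        ((List.finRange (n+2)).map fun i => x (E2 e i)).prod =
          ((List.finRange (n+1)).map fun i => (x ∘ Fin.succ) (e i)).prod * x 0 := by
      intro e
      rw [List.finRange_succ_last, List.map_append, List.prod_append, List.map_map]
      simp [Function.comp_def]
    have hIH := bracket_eq_sum n (x ∘ Fin.succ)
    calc nestedBracket ((List.finRange (n+2)).map x)
        = ⁅x 0, nestedBracket ((List.finRange (n+1)).map (x ∘ Fin.succ))⁆ := by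
          rw [List.finRange_succ, List.map_cons,
            nestedBracket_cons _ _ (by simp [List.finRange_succ]), List.map_map]
      _ = _ := by
          rw [hIH, Ring.lie_def, Finset.mul_sum, Finset.sum_mul, sub_eq_add_neg,
            ← Finset.sum_neg_distrib]
          congr 1
          · apply Finset.sum_congr rfl
            intro e _
            rw [piPerm'_E1, hx0 e, mul_smul_comm]
          · apply Finset.sum_congr rfl
            intro e _
            rw [piPerm'_E2, hx1 e, neg_smul, smul_mul_assoc]

open Classical in
noncomputable def pinv {p ℓ : ℕ} (h : Fin p → Fin ℓ) : Fin ℓ → Option (Fin p) :=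
  fun a => if hx : ∃ j, h j = a then some hx.choose else none

lemma pinv_eq_some {p ℓ : ℕ} {h : Fin p → Fin ℓ} (hinj : Function.Injective h)
    {a : Fin ℓ} {j : Fin p} : pinv h a = some j ↔ h j = a := by
  rw [pinv]
  constructor
  · intro hs
    by_cases hx : ∃ j, h j = a
    · rw [dif_pos hx] at hs
      obtain rfl := Option.some.injEq _ _ ▸ hs
      simpa using hx.choose_spec
    · rw [dif_neg hx] at hs; exact absurd hs (by simp)
  · intro hj
    have hx : ∃ j, h j = a := ⟨j, hj⟩
    rw [dif_pos hx]
    have h2 := hx.choose_spec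
    rw [hinj (h2.trans hj.symm)]

lemma pairwise_finRange_iff {n : ℕ} {R : Fin n → Fin n → Prop} :
    List.Pairwise R (List.finRange n) ↔ ∀ i j : Fin n, i < j → R i j := by
  rw [List.pairwise_iff_getElem]
  constructor
  · intro H i j hij
    have := H i j (by simpa using i.isLt) (by simpa using j.isLt) hij
    simpa using this
  · intro H i j hi hj hij
    have := H ⟨i, by simpa using hi⟩ ⟨j, by simpa using hj⟩ (by simpa using hij)
    simpa using this

lemma filterMap_pinv_eq_iff {p ℓ : ℕ} (h : Fin p → Fin ℓ) (hinj : Function.Injective h) :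
    (List.finRange ℓ).filterMap (pinv h) = List.finRange p ↔ StrictMono h := by
  set M := (List.finRange ℓ).filterMap (pinv h) with hM
  have hmem : ∀ j : Fin p, j ∈ M := by
    intro j
    rw [hM, List.mem_filterMap]
    exact ⟨h j, List.mem_finRange _, (pinv_eq_some hinj).2 rfl⟩
  have hnodup : M.Nodup := by
    apply List.Nodup.filterMap _ (List.nodup_finRange ℓ)
    intro a a' b hb hb'
    rw [Option.mem_def, pinv_eq_some hinj] at hb hb'
    rw [← hb, hb']
  have hperm : M.Perm (List.finRange p) := by
    apply List.perm_of_nodup_nodup_toFinset_eq hnodup (List.nodup_finRange p)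
    ext j
    simp only [List.mem_toFinset]
    simp [hmem j, List.mem_finRange]
  have hpair : List.Pairwise (· < ·) M ↔ StrictMono h := by
    rw [hM, List.pairwise_filterMap, pairwise_finRange_iff]
    constructor
    · intro H j j' hjj'
      rcases lt_trichotomy (h j) (h j') with hlt | heq | hgt
      · exact hlt
      · exact absurd (hinj heq) hjj'.ne
      · exact absurd (H _ _ hgt j' ((pinv_eq_some hinj).2 rfl) j ((pinv_eq_some hinj).2 rfl))
          (lt_asymm hjj')
    · intro H a a' haa' b hb b' hb'
      rw [pinv_eq_some hinj] at hb hb'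
      by_contra hc
      push_neg at hc
      have := H.monotone hc
      rw [hb, hb'] at this
      exact absurd (lt_of_lt_of_le haa' this) (lt_irrefl _)
  constructor
  · intro hEq
    rw [← hpair, hEq]
    exact List.pairwise_lt_finRange p
  · intro hSM
    exact List.Perm.eq_of_pairwise (fun a b _ _ h1 h2 => absurd (h1.trans h2) (lt_irrefl a))
      (hpair.2 hSM) (List.pairwise_lt_finRange p) hperm

lemma nestedBracket_eq_zero_of_one_mem {R : Type*} [Ring R] :
    ∀ l : List R, (1 : R) ∈ l → 2 ≤ l.length → nestedBracket l = 0 := by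
  intro l
  induction l with
  | nil => intro h; simp at h
  | cons a t ih =>
      intro hmem hlen
      cases t with
      | nil => simp at hlen
      | cons b t' =>
          rw [nestedBracket_cons _ _ (by simp)]
          rcases List.mem_cons.1 hmem with rfl | hmem'
          · rw [Ring.lie_def]; simp
          · cases t' with
            | nil =>
                obtain rfl : 1 = b := by simpa using hmem'
                show ⁅a, nestedBracket [(1:R)]⁆ = 0
                have h1 : nestedBracket [(1:R)] = 1 := rfl
                rw [h1, Ring.lie_def]
                simp
            | cons c t'' =>
                rw [ih hmem' (by simp), lie_zero]

lemma prod_single_list {γ : Type*} [Monoid γ] :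
    ∀ ws : List γ,
      (ws.map fun w => MonoidAlgebra.single w (1 : ℤ)).prod = MonoidAlgebra.single ws.prod 1 := by
  intro ws
  induction ws with
  | nil => simp [MonoidAlgebra.one_def]
  | cons a t ih =>
      rw [List.map_cons, List.prod_cons, List.prod_cons, ih, MonoidAlgebra.single_mul_single,
        one_mul]

lemma toList_prod_elim {α : Type*} :
    ∀ ws : List (Option α),
      FreeMonoid.toList ((ws.map fun o => o.elim 1 FreeMonoid.of).prod) = ws.reduceOption := by
  intro ws
  induction ws with
  | nil => rfl
  | cons o t ih =>
      rw [List.map_cons, List.prod_cons, FreeMonoid.toList_mul, ih]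
      cases o with
      | none => rfl
      | some j => rfl

lemma pinv_comp {p ℓ : ℕ} (g : Fin p → Fin ℓ) (hg : Function.Injective g)
    (σ : Equiv.Perm (Fin ℓ)) (i : Fin ℓ) :
    pinv g (σ i) = pinv (fun j => σ⁻¹ (g j)) i := by
  have hinj : Function.Injective (fun j => σ⁻¹ (g j)) := fun a b hab => hg (σ⁻¹.injective hab)
  cases hc : pinv (fun j => σ⁻¹ (g j)) i with
  | some j =>
      rw [pinv_eq_some hinj] at hc
      rw [pinv_eq_some hg, ← hc]
      simp
  | none =>
      cases hd : pinv g (σ i) with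
      | none => rfl
      | some j =>
          rw [pinv_eq_some hg] at hd
          have : pinv (fun j => σ⁻¹ (g j)) i = some j :=
            (pinv_eq_some hinj).2 (by rw [hd]; simp)
          rw [this] at hc
          exact absurd hc (by simp)

lemma comb {n p : ℕ} (hp : 1 ≤ p) (hpl : p < n + 1) (g : Fin p → Fin (n+1))
    (hg : Function.Injective g) :
    ∑ σ : Equiv.Perm (Fin (n+1)),
      (if StrictMono (fun j => σ⁻¹ (g j)) then piPerm' σ else 0) = 0 := by
  classical
  set x : Fin (n+1) → MonoidAlgebra ℤ (FreeMonoid (Fin p)) :=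
    fun a => MonoidAlgebra.single ((pinv g a).elim 1 FreeMonoid.of) 1 with hx
  have key := bracket_eq_sum n x
  obtain ⟨a0, ha0⟩ : ∃ a : Fin (n+1), ∀ j, g j ≠ a := by
    by_contra hcon
    push_neg at hcon
    have hsurj : Function.Surjective g := fun a => hcon a
    have := Fintype.card_le_of_surjective g hsurj
    simp only [Fintype.card_fin] at this
    omega
  have hx0 : x a0 = 1 := by
    rw [hx]
    have hnone : pinv g a0 = none := by
      rw [pinv, dif_neg]
      rintro ⟨j, hj⟩
      exact ha0 j hj
    show MonoidAlgebra.single ((pinv g a0).elim 1 FreeMonoid.of) 1 = 1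
    rw [hnone]
    exact (MonoidAlgebra.one_def).symm
  have hzero : nestedBracket ((List.finRange (n+1)).map x) = 0 := by
    apply nestedBracket_eq_zero_of_one_mem
    · rw [← hx0]
      exact List.mem_map_of_mem (f := x) (List.mem_finRange a0)
    · simp only [List.length_map, List.length_finRange]
      omega
  rw [hzero] at key
  have hprod : ∀ σ : Equiv.Perm (Fin (n+1)),
      ((List.finRange (n+1)).map fun i => x (σ i)).prod =
        MonoidAlgebra.single
          (((List.finRange (n+1)).map fun i =>
            ((pinv g (σ i)).elim 1 FreeMonoid.of : FreeMonoid (Fin p))).prod) 1 := by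
    intro σ
    rw [show ((List.finRange (n+1)).map fun i => x (σ i)) =
      (((List.finRange (n+1)).map fun i =>
        ((pinv g (σ i)).elim 1 FreeMonoid.of : FreeMonoid (Fin p))).map
        fun w => MonoidAlgebra.single w (1:ℤ)) by rw [List.map_map]; rfl, prod_single_list]
  have key2 := congrArg (fun F => F.coeff (FreeMonoid.ofList (List.finRange p))) key
  rw [MonoidAlgebra.coeff_sum, Finset.sum_apply'] at key2
  rw [MonoidAlgebra.coeff_zero, Finsupp.zero_apply] at key2
  have key3 : ∀ σ : Equiv.Perm (Fin (n+1)),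
      (piPerm' σ • ((List.finRange (n+1)).map fun i => x (σ i)).prod).coeff
          (FreeMonoid.ofList (List.finRange p)) =
        (if StrictMono (fun j => σ⁻¹ (g j)) then piPerm' σ else 0) := by
    intro σ
    rw [hprod σ, MonoidAlgebra.coeff_smul, Finsupp.smul_apply, MonoidAlgebra.coeff_single,
      Finsupp.single_apply]
    have hcond : (((List.finRange (n+1)).map fun i =>
        ((pinv g (σ i)).elim 1 FreeMonoid.of : FreeMonoid (Fin p))).prod =
          FreeMonoid.ofList (List.finRange p)) ↔ StrictMono (fun j => σ⁻¹ (g j)) := by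
      rw [← FreeMonoid.toList.apply_eq_iff_eq]
      rw [show ((List.finRange (n+1)).map fun i =>
        ((pinv g (σ i)).elim 1 FreeMonoid.of : FreeMonoid (Fin p))) =
        (((List.finRange (n+1)).map fun i => pinv g (σ i)).map
          fun o => o.elim 1 FreeMonoid.of) by rw [List.map_map]; rfl]
      rw [toList_prod_elim, FreeMonoid.toList_ofList]
      rw [show ((List.finRange (n+1)).map fun i => pinv g (σ i)) =
        ((List.finRange (n+1)).map (pinv fun j => σ⁻¹ (g j))) from
        List.map_congr_left (fun i _ => pinv_comp g hg σ i)]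
      rw [show ((List.finRange (n+1)).map (pinv fun j => σ⁻¹ (g j))).reduceOption =
        (List.finRange (n+1)).filterMap (pinv fun j => σ⁻¹ (g j)) by
          rw [List.reduceOption, List.filterMap_map]; rfl]
      exact filterMap_pinv_eq_iff _ (fun a b hab => hg (σ⁻¹.injective hab))
    rw [smul_eq_mul, mul_ite, mul_one, mul_zero]
    exact if_congr hcond rfl rfl
  rw [Finset.sum_congr rfl (fun σ _ => key3 σ)] at key2
  exact key2.symm


open scoped Classical in
/-- the cancellation identities `F_{ℓ,p}`:
for `2 ≤ ℓ`, `1 ≤ p ≤ ℓ-1`, a word `v` of length `ℓ`, a nonempty word `w` and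
exponents `b₁,…,b_p ≥ 0` with `b₁+⋯+b_p ≥ 1`,
`Σ_{σ ∈ S_ℓ} π_ℓ(σ) Σ_{i₁<⋯<i_p} X_{σ_{i_p}(v)^{b_p} ⋯ σ_{i₁}(v)^{b₁} w} = 0`. -/
theorem cancellation_F_ell_p {L : Type*} [LieRing L] {m ℓ p q : ℕ}
    (hℓ : 2 ≤ ℓ) (hp : 1 ≤ p) (hpℓ : p ≤ ℓ - 1) (hq : 1 ≤ q)
    (b : Fin p → ℕ) (hb : 1 ≤ ∑ j, b j)
    (X : Fin m → L) (v : Fin ℓ → Fin m) (w : Fin q → Fin m) :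
    ∑ σ : Equiv.Perm (Fin ℓ), piPerm σ •
      ∑ f ∈ Finset.univ.filter (fun f : Fin p → Fin ℓ => StrictMono f),
        nestedBracket
          ((((List.finRange p).reverse.map fun j =>
              List.replicate (b j) (X (v (σ (f j))))).flatten) ++
            (List.finRange q).map fun j => X (w j)) = 0 := by
  simp only [show @piPerm ℓ = @piPerm' ℓ from rfl]
  classical
  obtain ⟨n, rfl⟩ : ∃ n, ℓ = n + 1 := ⟨ℓ - 1, by omega⟩
  set T : (Fin p → Fin (n+1)) → L := fun u => nestedBracket
    ((((List.finRange p).reverse.map fun j => List.replicate (b j) (X (v (u j)))).flatten) ++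
      (List.finRange q).map fun j => X (w j)) with hT
  have inner : ∀ σ : Equiv.Perm (Fin (n+1)),
      (∑ f ∈ Finset.univ.filter (fun f : Fin p → Fin (n+1) => StrictMono f),
        T (fun j => σ (f j)))
      = ∑ g : Fin p → Fin (n+1),
          (if StrictMono (fun j => σ⁻¹ (g j)) then T g else 0) := by
    intro σ
    rw [← Finset.sum_filter]
    apply Finset.sum_nbij' (fun f => fun j => σ (f j)) (fun g => fun j => σ⁻¹ (g j))
    · intro f hf
      rw [Finset.mem_filter] at hf ⊢
      refine ⟨Finset.mem_univ _, ?_⟩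
      convert hf.2 using 1
      funext j
      simp
    · intro g hg
      rw [Finset.mem_filter] at hg ⊢
      exact ⟨Finset.mem_univ _, hg.2⟩
    · intro f _
      funext j
      simp
    · intro g _
      funext j
      simp
    · intro f _
      rfl
  calc ∑ σ : Equiv.Perm (Fin (n+1)), piPerm' σ •
      ∑ f ∈ Finset.univ.filter (fun f : Fin p → Fin (n+1) => StrictMono f),
        nestedBracket
          ((((List.finRange p).reverse.map fun j =>
              List.replicate (b j) (X (v (σ (f j))))).flatten) ++
            (List.finRange q).map fun j => X (w j))
      = ∑ σ : Equiv.Perm (Fin (n+1)), ∑ g : Fin p → Fin (n+1),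
          piPerm' σ • (if StrictMono (fun j => σ⁻¹ (g j)) then T g else 0) := by
        apply Finset.sum_congr rfl
        intro σ _
        rw [show (∑ f ∈ Finset.univ.filter (fun f : Fin p → Fin (n+1) => StrictMono f),
          nestedBracket
          ((((List.finRange p).reverse.map fun j =>
              List.replicate (b j) (X (v (σ (f j))))).flatten) ++
            (List.finRange q).map fun j => X (w j))) =
          ∑ f ∈ Finset.univ.filter (fun f : Fin p → Fin (n+1) => StrictMono f),
            T (fun j => σ (f j)) from rfl, inner σ, Finset.smul_sum]
    _ = ∑ g : Fin p → Fin (n+1), (∑ σ : Equiv.Perm (Fin (n+1)),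
          (if StrictMono (fun j => σ⁻¹ (g j)) then piPerm' σ else 0)) • T g := by
        rw [Finset.sum_comm]
        apply Finset.sum_congr rfl
        intro g _
        rw [Finset.sum_smul]
        apply Finset.sum_congr rfl
        intro σ _
        by_cases hc : StrictMono (fun j => σ⁻¹ (g j))
        · rw [if_pos hc, if_pos hc]
        · rw [if_neg hc, if_neg hc, smul_zero, zero_smul]
    _ = 0 := by
        apply Finset.sum_eq_zero
        intro g _
        by_cases hinj : Function.Injective g
        · rw [comb hp (by omega) g hinj, zero_smul]
        · rw [show (∑ σ : Equiv.Perm (Fin (n+1)),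
            (if StrictMono (fun j => σ⁻¹ (g j)) then piPerm' σ else 0)) = 0 from
            Finset.sum_eq_zero (fun σ _ => by
              rw [if_neg]
              intro hc
              exact hinj (show Function.Injective g from fun a b hab =>
                hc.injective (show σ⁻¹ (g a) = σ⁻¹ (g b) by rw [hab]))), zero_smul]
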